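/- Let H be a linear hypergraph, i.e., a hypergraph in which |e₁ ∩ e₂| ≤ 1 for every two distinct hyperedges e₁, e₂ ∈ 𝓔. Then for any two acyclic orientations h₁, h₂ of H, the flip distance satisfies dist(h₁, h₂) = |{e ∈ 𝓔 : h₁(e) ≠ h₂(e)}|. -/

import Mathlib

/-!
A hypergraph on vertex type `V` is given by a finite collection `𝓔` of nonempty
hyperedges (finsets of `V`).  An orientation assigns to each hyperedge a head
belonging to it.  `Arc 𝓔 h u v` is the arc relation of the digraph `D_h`, and an
orientation is acyclic if `D_h` has no directed cycle.  `flip 𝓔 h u v` is the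
orientation `h^{(u,v)}`, and `(u, v)` is flippable in `h` if `h^{(u,v)}` is acyclic.
-/

namespace PaperFlip

variable {V : Type*} [DecidableEq V]

/-- The hyperedges of a hypergraph, viewed as a subtype. -/
abbrev Edge (𝓔 : Finset (Finset V)) := {e : Finset V // e ∈ 𝓔}

/-- `h` is an orientation: the head of every hyperedge belongs to it. -/
def IsOrientation (𝓔 : Finset (Finset V)) (h : Edge 𝓔 → V) : Prop :=
  ∀ e : Edge 𝓔, h e ∈ e.1

/-- The arc relation of the digraph `D_h`: there is an arc from `u` to `v` iff some
hyperedge `e` has head `v` and contains `u` as a different vertex. -/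
def Arc (𝓔 : Finset (Finset V)) (h : Edge 𝓔 → V) (u v : V) : Prop :=
  ∃ e : Edge 𝓔, h e = v ∧ u ∈ e.1 ∧ u ≠ v

/-- An acyclic orientation: an orientation whose digraph `D_h` has no directed cycle. -/
def IsAcyclic (𝓔 : Finset (Finset V)) (h : Edge 𝓔 → V) : Prop :=
  IsOrientation 𝓔 h ∧ ∀ v : V, ¬ Relation.TransGen (Arc 𝓔 h) v v

/-- The orientation `h^{(u,v)}`: every hyperedge containing both `u` and `v` whose
head is `u` gets the new head `v`; all other heads are unchanged. -/
def flip (𝓔 : Finset (Finset V)) (h : Edge 𝓔 → V) (u v : V) : Edge 𝓔 → V :=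
  fun e => if u ∈ e.1 ∧ v ∈ e.1 ∧ h e = u then v else h e

/-- The ordered pair `(u, v)` of distinct vertices is flippable in `h` if `h^{(u,v)}`
is acyclic. -/
def Flippable (𝓔 : Finset (Finset V)) (h : Edge 𝓔 → V) (u v : V) : Prop :=
  u ≠ v ∧ IsAcyclic 𝓔 (flip 𝓔 h u v)

/-- `g₂` is obtained from `g₁` by a flip: `g₂ = g₁^{(u,v)} ≠ g₁` for some flippable
pair `(u, v)`. -/
def FlipStep (𝓔 : Finset (Finset V)) (g₁ g₂ : Edge 𝓔 → V) : Prop :=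
  ∃ u v : V, Flippable 𝓔 g₁ u v ∧ g₂ = flip 𝓔 g₁ u v ∧ g₂ ≠ g₁

/-- There is a sequence of `ℓ` flips transforming `h₁` into `h₂` (through acyclic
orientations). -/
def FlipSeq (𝓔 : Finset (Finset V)) (h₁ h₂ : Edge 𝓔 → V) (ℓ : ℕ) : Prop :=
  ∃ g : ℕ → Edge 𝓔 → V, g 0 = h₁ ∧ g ℓ = h₂ ∧ ∀ i < ℓ, FlipStep 𝓔 (g i) (g (i + 1))

/-- The flip distance: the least length of a flip sequence from `h₁` to `h₂`. -/
noncomputable def flipDist (𝓔 : Finset (Finset V)) (h₁ h₂ : Edge 𝓔 → V) : ℕ :=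
  sInf {ℓ : ℕ | FlipSeq 𝓔 h₁ h₂ ℓ}

open Relation

/-- A finite nonempty set has an element minimal for a transitive irreflexive relation. -/
lemma exists_rel_min {α : Type*} (r : α → α → Prop) (htr : Transitive r)
    (hirr : ∀ a, ¬ r a a) (S : Finset α) :
    S.Nonempty → ∃ u ∈ S, ∀ s ∈ S, ¬ r s u := by
  classical
  induction S using Finset.strongInduction with
  | _ S ih =>
    intro hS
    obtain ⟨a, ha⟩ := hS
    by_cases h : ∀ s ∈ S, ¬ r s a
    · exact ⟨a, ha, h⟩
    · push_neg at h
      obtain ⟨s₀, hs₀, hr₀⟩ := h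
      have hsub : S.filter (fun x => r x a) ⊂ S :=
        Finset.filter_ssubset.mpr ⟨a, ha, hirr a⟩
      obtain ⟨u, hu, hmin⟩ := ih _ hsub ⟨s₀, Finset.mem_filter.mpr ⟨hs₀, hr₀⟩⟩
      refine ⟨u, (Finset.mem_filter.mp hu).1, fun s hs hr => ?_⟩
      exact hmin s (Finset.mem_filter.mpr ⟨hs, htr hr (Finset.mem_filter.mp hu).2⟩) hr

/-- Arcs avoiding a fixed edge `e`. -/
def ArcAvoid (𝓔 : Finset (Finset V)) (e : Edge 𝓔) (h : Edge 𝓔 → V) (x y : V) : Prop :=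
  ∃ f : Edge 𝓔, f ≠ e ∧ h f = y ∧ x ∈ f.1 ∧ x ≠ y

lemma arcAvoid_le_arc {𝓔 : Finset (Finset V)} (e : Edge 𝓔) (h : Edge 𝓔 → V) :
    ∀ x y, ArcAvoid 𝓔 e h x y → Arc 𝓔 h x y := by
  rintro x y ⟨f, -, hf, hx, hxy⟩; exact ⟨f, hf, hx, hxy⟩

/-- Decompose a path in `r ∪ {arcs into v from p-vertices}`. -/
lemma transGen_or_via {α : Type*} {r : α → α → Prop} {p : α → Prop} {v : α} {a b : α}
    (h : TransGen (fun x y => r x y ∨ (y = v ∧ p x ∧ x ≠ v)) a b) :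
    TransGen r a b ∨ ∃ w, p w ∧ w ≠ v ∧ ReflTransGen r a w ∧ ReflTransGen r v b := by
  induction h with
  | single hab =>
    rcases hab with hab | ⟨hb, hp, hne⟩
    · exact Or.inl (TransGen.single hab)
    · exact Or.inr ⟨a, hp, hne, ReflTransGen.refl, hb ▸ ReflTransGen.refl⟩
  | tail hab hbc ih =>
    rename_i b' c
    rcases hbc with hbc | ⟨hc, hp, hne⟩
    · rcases ih with h' | ⟨w, hw, hwv, haw, hvb⟩
      · exact Or.inl (h'.tail hbc)
      · exact Or.inr ⟨w, hw, hwv, haw, hvb.tail hbc⟩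
    · rcases ih with h' | ⟨w, hw, hwv, haw, hvb⟩
      · exact Or.inr ⟨b', hp, hne, h'.to_reflTransGen, hc ▸ ReflTransGen.refl⟩
      · exact Or.inr ⟨w, hw, hwv, haw, hc ▸ ReflTransGen.refl⟩

/-- Updating the head of `e` to `v` preserves acyclicity if there is no path avoiding
`e` from `v` to another vertex of `e`. -/
lemma update_acyclic {𝓔 : Finset (Finset V)} {h : Edge 𝓔 → V} {e : Edge 𝓔} {v : V}
    (hh : IsAcyclic 𝓔 h) (hv : v ∈ e.1)
    (hgood : ¬ ∃ w ∈ e.1, w ≠ v ∧ TransGen (ArcAvoid 𝓔 e h) v w) :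
    IsAcyclic 𝓔 (Function.update h e v) := by
  classical
  constructor
  · intro f
    by_cases hf : f = e
    · subst hf; rw [Function.update_self]; exact hv
    · rw [Function.update_of_ne hf]; exact hh.1 f
  · intro z hz
    have hsub : ∀ x y, Arc 𝓔 (Function.update h e v) x y →
        (ArcAvoid 𝓔 e h x y ∨ (y = v ∧ x ∈ e.1 ∧ x ≠ v)) := by
      rintro x y ⟨f, hf, hx, hxy⟩
      by_cases hfe : f = e
      · subst hfe
        rw [Function.update_self] at hf
        subst hf
        exact Or.inr ⟨rfl, hx, hxy⟩
      · rw [Function.update_of_ne hfe] at hf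
        exact Or.inl ⟨f, hfe, hf, hx, hxy⟩
    have hz' := TransGen.mono hsub _ _ hz
    rcases transGen_or_via hz' with hcyc | ⟨w, hw, hwv, hzw, hvz⟩
    · exact hh.2 z (TransGen.mono (arcAvoid_le_arc e h) _ _ hcyc)
    · have hvw : ReflTransGen (ArcAvoid 𝓔 e h) v w := hvz.trans hzw
      rcases reflTransGen_iff_eq_or_transGen.mp hvw with h' | h'
      · exact hwv h'
      · exact hgood ⟨w, hw, hwv, h'⟩

/-- Decompose an `e`-avoiding `h₁`-path at the first arc realized by a difference edge. -/
lemma arcAvoid_decompose {𝓔 : Finset (Finset V)} {h₁ : Edge 𝓔 → V} (h₂ : Edge 𝓔 → V)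
    {e : Edge 𝓔} {a b : V} (hp : TransGen (ArcAvoid 𝓔 e h₁) a b) :
    TransGen (Arc 𝓔 h₂) a b ∨
      ∃ (x : V) (f : Edge 𝓔), f ≠ e ∧ h₁ f ≠ h₂ f ∧ x ∈ f.1 ∧
        ReflTransGen (Arc 𝓔 h₂) a x ∧ ReflTransGen (Arc 𝓔 h₁) (h₁ f) b := by
  classical
  induction hp using TransGen.head_induction_on with
  | single hab =>
    obtain ⟨f, hfe, hf, hx, hxy⟩ := hab
    by_cases hd : h₁ f = h₂ f
    · exact Or.inl (TransGen.single ⟨f, hd ▸ hf, hx, hxy⟩)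
    · exact Or.inr ⟨_, f, hfe, hd, hx, ReflTransGen.refl, hf ▸ ReflTransGen.refl⟩
  | head hac hcb ih =>
    rename_i a c
    obtain ⟨f, hfe, hf, hx, hxy⟩ := hac
    by_cases hd : h₁ f = h₂ f
    · have harc : Arc 𝓔 h₂ a c := ⟨f, hd ▸ hf, hx, hxy⟩
      rcases ih with h' | ⟨x, f', hfe', hd', hx', hax, hyb⟩
      · exact Or.inl (h'.head harc)
      · exact Or.inr ⟨x, f', hfe', hd', hx', hax.head harc, hyb⟩
    · refine Or.inr ⟨a, f, hfe, hd, hx, ReflTransGen.refl, ?_⟩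
      rw [hf]
      exact (TransGen.mono (arcAvoid_le_arc e h₁) _ _ hcb).to_reflTransGen

/-- Two distinct edges of a linear hypergraph cannot share two distinct vertices. -/
lemma linear_eq {𝓔 : Finset (Finset V)}
    (hlin : ∀ e₁ ∈ 𝓔, ∀ e₂ ∈ 𝓔, e₁ ≠ e₂ → (e₁ ∩ e₂).card ≤ 1)
    {e f : Edge 𝓔} {u v : V} (huv : u ≠ v)
    (hue : u ∈ e.1) (hve : v ∈ e.1) (huf : u ∈ f.1) (hvf : v ∈ f.1) : e = f := by
  by_contra hne
  have hval : e.1 ≠ f.1 := fun h => hne (Subtype.ext h)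
  have h2 : 1 < (e.1 ∩ f.1).card :=
    Finset.one_lt_card.mpr ⟨u, Finset.mem_inter.mpr ⟨hue, huf⟩,
      v, Finset.mem_inter.mpr ⟨hve, hvf⟩, huv⟩
  exact absurd (hlin e.1 e.2 f.1 f.2 hval) (by omega)

/-- Existence of a "good" difference edge: its `h₂`-head reaches no other of its
vertices by an `e`-avoiding `h₁`-path. -/
lemma exists_good_edge {𝓔 : Finset (Finset V)}
    (hlin : ∀ e₁ ∈ 𝓔, ∀ e₂ ∈ 𝓔, e₁ ≠ e₂ → (e₁ ∩ e₂).card ≤ 1)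
    {h₁ h₂ : Edge 𝓔 → V} (hh₁ : IsAcyclic 𝓔 h₁) (hh₂ : IsAcyclic 𝓔 h₂)
    (hne : ∃ e : Edge 𝓔, h₁ e ≠ h₂ e) :
    ∃ e : Edge 𝓔, h₁ e ≠ h₂ e ∧
      ¬ ∃ w ∈ e.1, w ≠ h₂ e ∧ TransGen (ArcAvoid 𝓔 e h₁) (h₂ e) w := by
  classical
  set D : Finset (Edge 𝓔) := Finset.univ.filter (fun f => h₁ f ≠ h₂ f) with hD
  have hDne : D.Nonempty := by
    obtain ⟨e, he⟩ := hne
    exact ⟨e, Finset.mem_filter.mpr ⟨Finset.mem_univ _, he⟩⟩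
  -- choose u : a minimal h₁-head of a difference edge
  obtain ⟨u, huS, humin⟩ := exists_rel_min (TransGen (Arc 𝓔 h₁))
    (fun _ _ _ => TransGen.trans) hh₁.2 (D.image h₁) (hDne.image h₁)
  set Du : Finset (Edge 𝓔) := D.filter (fun f => h₁ f = u) with hDu
  have hDune : Du.Nonempty := by
    obtain ⟨e, heD, heu⟩ := Finset.mem_image.mp huS
    exact ⟨e, Finset.mem_filter.mpr ⟨heD, heu⟩⟩
  -- choose v : a maximal h₂-head among difference edges with h₁-head u
  obtain ⟨v, hvT, hvmax⟩ := exists_rel_min (fun a b => TransGen (Arc 𝓔 h₂) b a)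
    (fun _ _ _ hab hbc => TransGen.trans hbc hab) hh₂.2 (Du.image h₂) (hDune.image h₂)
  obtain ⟨e, heDu, hev⟩ := Finset.mem_image.mp hvT
  have heD : e ∈ D := (Finset.mem_filter.mp heDu).1
  have heu : h₁ e = u := (Finset.mem_filter.mp heDu).2
  have hediff : h₁ e ≠ h₂ e := (Finset.mem_filter.mp heD).2
  have huv : u ≠ v := heu ▸ hev ▸ hediff
  have hue : u ∈ e.1 := heu ▸ hh₁.1 e
  have hve : v ∈ e.1 := hev ▸ hh₂.1 e
  refine ⟨e, hediff, ?_⟩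
  rw [hev]
  rintro ⟨w, hw, hwv, hpath⟩
  rcases arcAvoid_decompose h₂ hpath with hcyc | ⟨x, f, hfe, hdf, hxf, hvx, hyw⟩
  · -- a cycle in D_{h₂} through v
    exact hh₂.2 v (hcyc.tail ⟨e, hev, hw, hwv⟩)
  · -- the first difference-edge arc on the path has head u
    have hfD : f ∈ D := Finset.mem_filter.mpr ⟨Finset.mem_univ _, hdf⟩
    have hyu : h₁ f = u := by
      -- from h₁ f the path continues to w, and w reaches u in D_{h₁}
      have hwu : w = u ∨ TransGen (Arc 𝓔 h₁) w u := by
        by_cases h : w = u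
        · exact Or.inl h
        · exact Or.inr (TransGen.single ⟨e, heu, hw, h⟩)
      have hyb : h₁ f = u ∨ TransGen (Arc 𝓔 h₁) (h₁ f) u := by
        rcases reflTransGen_iff_eq_or_transGen.mp hyw with h' | h'
        · rcases hwu with h'' | h''
          · exact Or.inl (h' ▸ h'')
          · exact Or.inr (h' ▸ h'')
        · rcases hwu with h'' | h''
          · exact Or.inr (h'' ▸ h')
          · exact Or.inr (h'.trans h'')
      rcases hyb with h' | h'
      · exact h'
      · exact absurd h' (humin _ (Finset.mem_image_of_mem h₁ hfD))
    have hfDu : f ∈ Du := Finset.mem_filter.mpr ⟨hfD, hyu⟩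
    have hmax := hvmax _ (Finset.mem_image_of_mem h₂ hfDu)
    by_cases hxhf : x = h₂ f
    · -- then v = x = h₂ f, and e, f share the two vertices u, v
      have hvex : v = x := by
        rcases reflTransGen_iff_eq_or_transGen.mp hvx with h' | h'
        · exact h'.symm
        · exact absurd (hxhf ▸ h') hmax
      have : e = f := linear_eq hlin huv hue hve (hyu ▸ hh₁.1 f) (hvex.trans hxhf ▸ hh₂.1 f)
      exact hfe this.symm
    · -- otherwise v reaches h₂ f in D_{h₂}, contradicting maximality of v
      have harc : Arc 𝓔 h₂ x (h₂ f) := ⟨f, rfl, hxf, hxhf⟩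
      exact hmax (TransGen.tail' hvx harc)

/-- In a linear hypergraph, flipping `(h e, v)` with `v ∈ e` only updates `e`. -/
lemma flip_eq_update {𝓔 : Finset (Finset V)}
    (hlin : ∀ e₁ ∈ 𝓔, ∀ e₂ ∈ 𝓔, e₁ ≠ e₂ → (e₁ ∩ e₂).card ≤ 1)
    {h : Edge 𝓔 → V} {e : Edge 𝓔} {u v : V}
    (hu : h e = u) (hue : u ∈ e.1) (hve : v ∈ e.1) (huv : u ≠ v) :
    flip 𝓔 h u v = Function.update h e v := by
  classical
  funext f
  by_cases hfe : f = e
  · rw [hfe, Function.update_self]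
    have hcnd : u ∈ e.1 ∧ v ∈ e.1 ∧ h e = u := ⟨hue, hve, hu⟩
    simp only [flip, if_pos hcnd]
  · rw [Function.update_of_ne hfe]
    simp only [flip]
    split_ifs with hc
    · exact absurd (linear_eq hlin huv hue hve hc.1 hc.2.1).symm hfe
    · rfl

/-- Upper bound: a flip sequence of length `|D|` exists. -/
lemma flipSeq_of_card {𝓔 : Finset (Finset V)}
    (hlin : ∀ e₁ ∈ 𝓔, ∀ e₂ ∈ 𝓔, e₁ ≠ e₂ → (e₁ ∩ e₂).card ≤ 1) :
    ∀ (n : ℕ) (h₁ h₂ : Edge 𝓔 → V), IsAcyclic 𝓔 h₁ → IsAcyclic 𝓔 h₂ →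
      (Finset.univ.filter fun e : Edge 𝓔 => h₁ e ≠ h₂ e).card = n → FlipSeq 𝓔 h₁ h₂ n := by
  classical
  intro n
  induction n with
  | zero =>
    intro h₁ h₂ _ _ hcard
    have : h₁ = h₂ := by
      funext e
      by_contra hne
      have : e ∈ Finset.univ.filter fun e : Edge 𝓔 => h₁ e ≠ h₂ e :=
        Finset.mem_filter.mpr ⟨Finset.mem_univ _, hne⟩
      rw [Finset.card_eq_zero.mp hcard] at this
      exact absurd this (Finset.notMem_empty e)
    exact ⟨fun _ => h₁, rfl, this ▸ rfl, fun i hi => absurd hi (Nat.not_lt_zero i)⟩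
  | succ n ih =>
    intro h₁ h₂ hh₁ hh₂ hcard
    have hne : ∃ e : Edge 𝓔, h₁ e ≠ h₂ e := by
      have : (Finset.univ.filter fun e : Edge 𝓔 => h₁ e ≠ h₂ e).Nonempty :=
        Finset.card_pos.mp (by omega)
      obtain ⟨e, he⟩ := this
      exact ⟨e, (Finset.mem_filter.mp he).2⟩
    obtain ⟨e, hediff, hgood⟩ := exists_good_edge hlin hh₁ hh₂ hne
    set u := h₁ e with hu
    set v := h₂ e with hv
    have hue : u ∈ e.1 := hh₁.1 e
    have hve : v ∈ e.1 := hh₂.1 e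
    set g₁ : Edge 𝓔 → V := Function.update h₁ e v with hg₁
    have hflip : flip 𝓔 h₁ u v = g₁ := flip_eq_update hlin rfl hue hve hediff
    have hacyc : IsAcyclic 𝓔 g₁ := update_acyclic hh₁ hve hgood
    have hg₁e : g₁ e = v := Function.update_self e v h₁
    have hgne : g₁ ≠ h₁ := fun h => hediff (by rw [← hg₁e, h])
    have hstep : FlipStep 𝓔 h₁ g₁ :=
      ⟨u, v, ⟨hediff, hflip ▸ hacyc⟩, hflip.symm, hgne⟩
    have hDg : (Finset.univ.filter fun f : Edge 𝓔 => g₁ f ≠ h₂ f)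
        = (Finset.univ.filter fun f : Edge 𝓔 => h₁ f ≠ h₂ f).erase e := by
      ext f
      simp only [Finset.mem_erase, Finset.mem_filter, Finset.mem_univ, true_and]
      by_cases hfe : f = e
      · subst hfe
        simp [hg₁e, ← hv]
      · rw [hg₁, Function.update_of_ne hfe]
        tauto
    have hcard' : (Finset.univ.filter fun f : Edge 𝓔 => g₁ f ≠ h₂ f).card = n := by
      have heD : e ∈ Finset.univ.filter fun f : Edge 𝓔 => h₁ f ≠ h₂ f :=
        Finset.mem_filter.mpr ⟨Finset.mem_univ _, hediff⟩
      rw [hDg, Finset.card_erase_of_mem heD, hcard]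
      omega
    obtain ⟨g, hg0, hgn, hsteps⟩ := ih g₁ h₂ hacyc hh₂ hcard'
    refine ⟨fun i => if i = 0 then h₁ else g (i - 1), rfl, by simp [hgn], ?_⟩
    intro i hi
    match i with
    | 0 => simpa [hg0] using hstep
    | Nat.succ j =>
      simpa using hsteps j (by omega)

/-- In a linear hypergraph, one flip changes at most one head. -/
lemma flipStep_card_le {𝓔 : Finset (Finset V)}
    (hlin : ∀ e₁ ∈ 𝓔, ∀ e₂ ∈ 𝓔, e₁ ≠ e₂ → (e₁ ∩ e₂).card ≤ 1)
    {g₁ g₂ : Edge 𝓔 → V} (hs : FlipStep 𝓔 g₁ g₂) :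
    (Finset.univ.filter fun f : Edge 𝓔 => g₁ f ≠ g₂ f).card ≤ 1 := by
  classical
  obtain ⟨u, v, ⟨huv, -⟩, heq, -⟩ := hs
  subst heq
  refine Finset.card_le_one.mpr ?_
  intro a ha b hb
  have hchange : ∀ f : Edge 𝓔, g₁ f ≠ flip 𝓔 g₁ u v f → u ∈ f.1 ∧ v ∈ f.1 := by
    intro f hf
    by_contra hc
    apply hf
    simp only [flip]
    rw [if_neg (fun hcnd => hc ⟨hcnd.1, hcnd.2.1⟩)]
  have hha := hchange a (Finset.mem_filter.mp ha).2
  have hhb := hchange b (Finset.mem_filter.mp hb).2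
  exact linear_eq hlin huv hha.1 hha.2 hhb.1 hhb.2

lemma diff_triangle {𝓔 : Finset (Finset V)} (a b c : Edge 𝓔 → V) :
    (Finset.univ.filter fun f : Edge 𝓔 => a f ≠ c f)
      ⊆ (Finset.univ.filter fun f : Edge 𝓔 => a f ≠ b f)
        ∪ (Finset.univ.filter fun f : Edge 𝓔 => b f ≠ c f) := by
  classical
  intro f hf
  simp only [Finset.mem_union, Finset.mem_filter, Finset.mem_univ, true_and] at *
  by_contra hcon
  push_neg at hcon
  exact hf (hcon.1.trans hcon.2)

/-- Lower bound: any flip sequence has length at least `|D|`. -/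
lemma card_le_of_flipSeq {𝓔 : Finset (Finset V)}
    (hlin : ∀ e₁ ∈ 𝓔, ∀ e₂ ∈ 𝓔, e₁ ≠ e₂ → (e₁ ∩ e₂).card ≤ 1)
    {h₁ h₂ : Edge 𝓔 → V} {ℓ : ℕ} (hseq : FlipSeq 𝓔 h₁ h₂ ℓ) :
    (Finset.univ.filter fun e : Edge 𝓔 => h₁ e ≠ h₂ e).card ≤ ℓ := by
  classical
  obtain ⟨g, hg0, hgl, hstep⟩ := hseq
  have key : ∀ j, j ≤ ℓ →
      (Finset.univ.filter fun e : Edge 𝓔 => g (ℓ - j) e ≠ h₂ e).card ≤ j := by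
    intro j
    induction j with
    | zero =>
      intro _
      simp only [Nat.sub_zero, hgl]
      simp
    | succ j ih =>
      intro hj
      have hi : ℓ - (j + 1) < ℓ := by omega
      have hstep' := hstep (ℓ - (j + 1)) hi
      have hsucc : ℓ - (j + 1) + 1 = ℓ - j := by omega
      calc (Finset.univ.filter fun e : Edge 𝓔 => g (ℓ - (j+1)) e ≠ h₂ e).card
          ≤ ((Finset.univ.filter fun e : Edge 𝓔 => g (ℓ - (j+1)) e ≠ g (ℓ - (j+1) + 1) e)
            ∪ (Finset.univ.filter fun e : Edge 𝓔 => g (ℓ - (j+1) + 1) e ≠ h₂ e)).card :=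
            Finset.card_le_card (diff_triangle _ _ _)
        _ ≤ (Finset.univ.filter fun e : Edge 𝓔 => g (ℓ - (j+1)) e ≠ g (ℓ - (j+1) + 1) e).card
            + (Finset.univ.filter fun e : Edge 𝓔 => g (ℓ - (j+1) + 1) e ≠ h₂ e).card :=
            Finset.card_union_le _ _
        _ ≤ 1 + j := by
            refine Nat.add_le_add (flipStep_card_le hlin hstep') ?_
            rw [hsucc]
            exact ih (by omega)
        _ = j + 1 := by omega
  have := key ℓ le_rfl
  simpa [hg0] using this

/-- If `H` is a linear hypergraph (any two distinct hyperedges meet in at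
most one vertex), then for any two acyclic orientations `h₁, h₂` of `H` the flip distance
equals `|{e ∈ 𝓔 : h₁(e) ≠ h₂(e)}|`. -/
theorem flipDist_eq_card_diff_of_linear {V : Type*} [DecidableEq V]
    (𝓔 : Finset (Finset V)) (hE : ∀ e ∈ 𝓔, e.Nonempty)
    (hlin : ∀ e₁ ∈ 𝓔, ∀ e₂ ∈ 𝓔, e₁ ≠ e₂ → (e₁ ∩ e₂).card ≤ 1)
    (h₁ h₂ : Edge 𝓔 → V) (hh₁ : IsAcyclic 𝓔 h₁) (hh₂ : IsAcyclic 𝓔 h₂) :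
    flipDist 𝓔 h₁ h₂ = (Finset.univ.filter fun e : Edge 𝓔 => h₁ e ≠ h₂ e).card := by
  classical
  have hmem : FlipSeq 𝓔 h₁ h₂
      (Finset.univ.filter fun e : Edge 𝓔 => h₁ e ≠ h₂ e).card :=
    flipSeq_of_card hlin _ h₁ h₂ hh₁ hh₂ rfl
  refine le_antisymm (Nat.sInf_le hmem)
    (le_csInf ⟨_, hmem⟩ fun ℓ hℓ => card_le_of_flipSeq hlin hℓ)


end PaperFlip
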